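/- Under internal validity of the RCT, internal validity of the observational study, external validity (transportability of the CATE), and overlap, the instance-wise signal difference ψ := ψ₁ − ψ₀ satisfies the conditional moment restrictions E[ψ | X=x] = 0 for every x with P(X=x) > 0. -/

import Mathlib

open MeasureTheory

/-- Conditional expectation of `Z` given the event `E`: `E[Z | E] = (∫_E Z dP) / P(E)`. -/
noncomputable def eCond {Ω : Type*} [MeasurableSpace Ω] (P : Measure Ω) (E : Set Ω)
    (Z : Ω → ℝ) : ℝ :=
  (∫ ω in E, Z ω ∂P) / (P E).toReal

/-- Conditional probability of `E'` given the event `E`: `P(E' | E) = P(E' ∩ E) / P(E)`. -/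
noncomputable def pCond {Ω : Type*} [MeasurableSpace Ω] (P : Measure Ω) (E' E : Set Ω) : ℝ :=
  (P (E' ∩ E)).toReal / (P E).toReal

/-- The RCT CATE signal
`ψ₀ = (1{S=0} / P(S=0 | X)) · Y · (1{A=1}/p − 1{A=0}/(1−p))`. -/
noncomputable def psi0 {Ω 𝒳 : Type*} [MeasurableSpace Ω] (P : Measure Ω)
    (X : Ω → 𝒳) (S A : Ω → Fin 2) (Y : Ω → ℝ) (p : ℝ) (ω : Ω) : ℝ :=
  ((if S ω = 0 then (1 : ℝ) else 0) / pCond P {ω' | S ω' = 0} {ω' | X ω' = X ω}) * Y ω *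
    ((if A ω = 1 then (1 : ℝ) else 0) / p - (if A ω = 0 then (1 : ℝ) else 0) / (1 - p))

/-- The response surface `μ_a(x) = E[Y | X=x, A=a, S=1]`. -/
noncomputable def mu {Ω 𝒳 : Type*} [MeasurableSpace Ω] (P : Measure Ω)
    (X : Ω → 𝒳) (S A : Ω → Fin 2) (Y : Ω → ℝ) (a : Fin 2) (x : 𝒳) : ℝ :=
  eCond P {ω | X ω = x ∧ A ω = a ∧ S ω = 1} Y

/-- The doubly robust observational CATE signal
`ψ₁ = (1 / P(S=0 | X)) · [ 1{S=0}·(μ₁(X) − μ₀(X)) + 1{S=1}·(P(S=0 | X)/P(S=1 | X)) ·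
( 1{A=1}(Y − μ₁(X))/P(A=1 | X, S=1) − 1{A=0}(Y − μ₀(X))/P(A=0 | X, S=1) ) ]`. -/
noncomputable def psi1 {Ω 𝒳 : Type*} [MeasurableSpace Ω] (P : Measure Ω)
    (X : Ω → 𝒳) (S A : Ω → Fin 2) (Y : Ω → ℝ) (ω : Ω) : ℝ :=
  (1 / pCond P {ω' | S ω' = 0} {ω' | X ω' = X ω}) *
    ((if S ω = 0 then (1 : ℝ) else 0) * (mu P X S A Y 1 (X ω) - mu P X S A Y 0 (X ω)) +
      (if S ω = 1 then (1 : ℝ) else 0) *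
        (pCond P {ω' | S ω' = 0} {ω' | X ω' = X ω} /
          pCond P {ω' | S ω' = 1} {ω' | X ω' = X ω}) *
        ((if A ω = 1 then (1 : ℝ) else 0) * (Y ω - mu P X S A Y 1 (X ω)) /
            pCond P {ω' | A ω' = 1} {ω' | X ω' = X ω ∧ S ω' = 1} -
          (if A ω = 0 then (1 : ℝ) else 0) * (Y ω - mu P X S A Y 0 (X ω)) /
            pCond P {ω' | A ω' = 0} {ω' | X ω' = X ω ∧ S ω' = 1}))

set_option maxHeartbeats 1000000 in
/-- Under internal validity of the RCT, internal validity of the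
observational study, external validity (transportability of the CATE), and overlap, the
instance-wise signal difference `ψ = ψ₁ − ψ₀` satisfies the conditional moment
restrictions `E[ψ | X=x] = 0` for every `x` with `P(X=x) > 0`. -/
theorem signal_difference_cmr
    {Ω 𝒳 : Type*} [MeasurableSpace Ω] [MeasurableSpace 𝒳]
    [Countable 𝒳] [MeasurableSingletonClass 𝒳]
    (P : Measure Ω) [IsProbabilityMeasure P]
    (X : Ω → 𝒳) (S A : Ω → Fin 2) (Yp : Fin 2 → Ω → ℝ) (Y : Ω → ℝ)
    (hX : Measurable X) (hS : Measurable S) (hA : Measurable A)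
    (hYp : ∀ a, Integrable (Yp a) P) (hY : Integrable Y P)
    (p : ℝ) (hp0 : 0 < p) (hp1 : p < 1)
    -- internal validity of the RCT:
    (consistencyRCT : ∀ a : Fin 2, ∀ᵐ ω ∂P, S ω = 0 → A ω = a → Y ω = Yp a ω)
    (ignorabilityRCT : ∀ a a' : Fin 2, ∀ x : 𝒳,
      0 < P {ω | X ω = x ∧ S ω = 0 ∧ A ω = a'} →
      eCond P {ω | X ω = x ∧ S ω = 0 ∧ A ω = a'} (Yp a)
        = eCond P {ω | X ω = x ∧ S ω = 0} (Yp a))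
    (fixedAssignment : ∀ x : 𝒳, 0 < P {ω | X ω = x ∧ S ω = 0} →
      pCond P {ω | A ω = 1} {ω | X ω = x ∧ S ω = 0} = p)
    -- internal validity of the observational study:
    (consistencyObs : ∀ a : Fin 2, ∀ᵐ ω ∂P, S ω = 1 → A ω = a → Y ω = Yp a ω)
    (ignorabilityObs : ∀ a a' : Fin 2, ∀ x : 𝒳,
      0 < P {ω | X ω = x ∧ S ω = 1 ∧ A ω = a'} →
      eCond P {ω | X ω = x ∧ S ω = 1 ∧ A ω = a'} (Yp a)
        = eCond P {ω | X ω = x ∧ S ω = 1} (Yp a))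
    (posTreatment : ∀ a : Fin 2, ∀ x : 𝒳, 0 < P {ω | X ω = x ∧ S ω = 1} →
      0 < pCond P {ω | A ω = a} {ω | X ω = x ∧ S ω = 1})
    -- external validity (transportability of the CATE):
    (transport : ∀ x : 𝒳, 0 < P {ω | X ω = x ∧ S ω = 0} → 0 < P {ω | X ω = x ∧ S ω = 1} →
      eCond P {ω | X ω = x ∧ S ω = 0} (fun ω => Yp 1 ω - Yp 0 ω)
        = eCond P {ω | X ω = x ∧ S ω = 1} (fun ω => Yp 1 ω - Yp 0 ω))
    (posSelection : ∀ x : 𝒳, 0 < P {ω | X ω = x ∧ S ω = 0} → 0 < P {ω | X ω = x ∧ S ω = 1})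
    -- overlap:
    (overlap : ∀ x : 𝒳, 0 < P {ω | X ω = x} →
      0 < P {ω | X ω = x ∧ S ω = 0} ∧ 0 < P {ω | X ω = x ∧ S ω = 1}) :
    ∀ x : 𝒳, 0 < P {ω | X ω = x} →
      eCond P {ω | X ω = x} (fun ω => psi1 P X S A Y ω - psi0 P X S A Y p ω) = 0 := by
  intro x hx
  have fin2 : ∀ i : Fin 2, i = 0 ∨ i = 1 := by decide
  have f01 : ¬ ((0 : Fin 2) = 1) := by decide
  have f10 : ¬ ((1 : Fin 2) = 0) := by decide
  -- measurable sets
  have ms : ∀ s : Fin 2, MeasurableSet {ω | S ω = s} := fun s => hS (measurableSet_singleton s)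
  have ma : ∀ a : Fin 2, MeasurableSet {ω | A ω = a} := fun a => hA (measurableSet_singleton a)
  have hmx : MeasurableSet {ω | X ω = x} := hX (measurableSet_singleton x)
  have hmE : MeasurableSet {ω | X ω = x ∧ S ω = 0} := hmx.inter (ms 0)
  have hmF : MeasurableSet {ω | X ω = x ∧ S ω = 1} := hmx.inter (ms 1)
  have hmE1 : MeasurableSet {ω | X ω = x ∧ S ω = 0 ∧ A ω = 1} :=
    hmx.inter ((ms 0).inter (ma 1))
  have hmE0 : MeasurableSet {ω | X ω = x ∧ S ω = 0 ∧ A ω = 0} :=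
    hmx.inter ((ms 0).inter (ma 0))
  have hmG : ∀ a : Fin 2, MeasurableSet {ω | X ω = x ∧ A ω = a ∧ S ω = 1} :=
    fun a => hmx.inter ((ma a).inter (ms 1))
  -- positivity
  obtain ⟨hP0, hP1⟩ := overlap x hx
  have tr : ∀ E : Set Ω, 0 < P E → 0 < (P E).toReal :=
    fun E h => ENNReal.toReal_pos h.ne' (measure_ne_top P E)
  have hPx := tr _ hx
  have hPE := tr _ hP0
  have hPF := tr _ hP1
  -- set identities
  have hq0 : pCond P {ω' | S ω' = 0} {ω' | X ω' = x}
      = (P {ω | X ω = x ∧ S ω = 0}).toReal / (P {ω | X ω = x}).toReal := by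
    rw [pCond, show {ω' | S ω' = 0} ∩ {ω' | X ω' = x} = {ω | X ω = x ∧ S ω = 0} from
      Set.ext fun ω => and_comm]
  have hq1 : pCond P {ω' | S ω' = 1} {ω' | X ω' = x}
      = (P {ω | X ω = x ∧ S ω = 1}).toReal / (P {ω | X ω = x}).toReal := by
    rw [pCond, show {ω' | S ω' = 1} ∩ {ω' | X ω' = x} = {ω | X ω = x ∧ S ω = 1} from
      Set.ext fun ω => and_comm]
  have hGset : ∀ a : Fin 2, {ω' | A ω' = a} ∩ {ω' | X ω' = x ∧ S ω' = 1}
      = {ω | X ω = x ∧ A ω = a ∧ S ω = 1} := by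
    intro a; ext ω; simp only [Set.mem_inter_iff, Set.mem_setOf_eq]; tauto
  have hE1set : {ω' | A ω' = 1} ∩ {ω | X ω = x ∧ S ω = 0}
      = {ω | X ω = x ∧ S ω = 0 ∧ A ω = 1} := by
    ext ω; simp only [Set.mem_inter_iff, Set.mem_setOf_eq]; tauto
  have hIgset : ∀ a : Fin 2, {ω | X ω = x ∧ S ω = 1 ∧ A ω = a}
      = {ω | X ω = x ∧ A ω = a ∧ S ω = 1} := by
    intro a; ext ω; simp only [Set.mem_setOf_eq]; tauto
  -- pCond positivity
  have hq0pos : 0 < pCond P {ω' | S ω' = 0} {ω' | X ω' = x} := by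
    rw [hq0]; exact div_pos hPE hPx
  have hq1pos : 0 < pCond P {ω' | S ω' = 1} {ω' | X ω' = x} := by
    rw [hq1]; exact div_pos hPF hPx
  have he1pos : 0 < pCond P {ω' | A ω' = 1} {ω' | X ω' = x ∧ S ω' = 1} := posTreatment 1 x hP1
  have he0pos : 0 < pCond P {ω' | A ω' = 0} {ω' | X ω' = x ∧ S ω' = 1} := posTreatment 0 x hP1
  -- positivity of observational cells
  have hPG : ∀ a : Fin 2, 0 < (P {ω | X ω = x ∧ A ω = a ∧ S ω = 1}).toReal := by
    intro a
    have h := posTreatment a x hP1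
    rw [pCond, hGset a] at h
    rcases div_pos_iff.mp h with ⟨h1, _⟩ | ⟨h1, _⟩
    · exact h1
    · exact absurd h1 (not_lt.mpr ENNReal.toReal_nonneg)
  -- fixed assignment value
  have hfa := fixedAssignment x hP0
  rw [pCond, hE1set] at hfa
  rw [div_eq_iff hPE.ne'] at hfa
  -- split {X=x,S=0} by treatment
  have hsplit : (P {ω | X ω = x ∧ S ω = 0}).toReal
      = (P {ω | X ω = x ∧ S ω = 0 ∧ A ω = 1}).toReal
        + (P {ω | X ω = x ∧ S ω = 0 ∧ A ω = 0}).toReal := by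
    have hdisj : Disjoint {ω | X ω = x ∧ S ω = 0 ∧ A ω = 1} {ω | X ω = x ∧ S ω = 0 ∧ A ω = 0} := by
      rw [Set.disjoint_left]
      rintro ω ⟨_, _, h1⟩ ⟨_, _, h0⟩
      rw [h1] at h0; exact f10 h0
    have hunion : {ω | X ω = x ∧ S ω = 0 ∧ A ω = 1} ∪ {ω | X ω = x ∧ S ω = 0 ∧ A ω = 0}
        = {ω | X ω = x ∧ S ω = 0} := by
      ext ω; simp only [Set.mem_union, Set.mem_setOf_eq]
      constructor
      · rintro (⟨h, h', _⟩ | ⟨h, h', _⟩) <;> exact ⟨h, h'⟩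
      · rintro ⟨h, h'⟩
        rcases fin2 (A ω) with ha | ha
        · exact Or.inr ⟨h, h', ha⟩
        · exact Or.inl ⟨h, h', ha⟩
    rw [← hunion, measure_union hdisj hmE0,
      ENNReal.toReal_add (measure_ne_top _ _) (measure_ne_top _ _)]
  have hPE1 : (P {ω | X ω = x ∧ S ω = 0 ∧ A ω = 1}).toReal
      = p * (P {ω | X ω = x ∧ S ω = 0}).toReal := hfa
  have hPE0 : (P {ω | X ω = x ∧ S ω = 0 ∧ A ω = 0}).toReal
      = (1 - p) * (P {ω | X ω = x ∧ S ω = 0}).toReal := by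
    linear_combination -hsplit - hPE1
  have hPE1pos : 0 < (P {ω | X ω = x ∧ S ω = 0 ∧ A ω = 1}).toReal := by
    rw [hPE1]; positivity
  have hPE0pos : 0 < (P {ω | X ω = x ∧ S ω = 0 ∧ A ω = 0}).toReal := by
    rw [hPE0]; nlinarith
  have toPos : ∀ E : Set Ω, 0 < (P E).toReal → 0 < P E := fun E h =>
    pos_iff_ne_zero.mpr fun h0 => by rw [h0] at h; simp at h
  -- integrals over RCT cells
  have hYE1 : ∫ ω in {ω | X ω = x ∧ S ω = 0 ∧ A ω = 1}, Y ω ∂P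
      = eCond P {ω | X ω = x ∧ S ω = 0} (Yp 1)
        * (p * (P {ω | X ω = x ∧ S ω = 0}).toReal) := by
    rw [setIntegral_congr_ae hmE1 ((consistencyRCT 1).mono fun ω h hm => h hm.2.1 hm.2.2)]
    rw [← ignorabilityRCT 1 1 x (toPos _ hPE1pos), ← hPE1, eCond,
      div_mul_cancel₀ _ hPE1pos.ne']
  have hYE0 : ∫ ω in {ω | X ω = x ∧ S ω = 0 ∧ A ω = 0}, Y ω ∂P
      = eCond P {ω | X ω = x ∧ S ω = 0} (Yp 0)
        * ((1 - p) * (P {ω | X ω = x ∧ S ω = 0}).toReal) := by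
    rw [setIntegral_congr_ae hmE0 ((consistencyRCT 0).mono fun ω h hm => h hm.2.1 hm.2.2)]
    rw [← ignorabilityRCT 0 0 x (toPos _ hPE0pos), ← hPE0, eCond,
      div_mul_cancel₀ _ hPE0pos.ne']
  -- observational correction terms vanish
  have hGzero : ∀ a : Fin 2,
      ∫ ω in {ω | X ω = x ∧ A ω = a ∧ S ω = 1}, (Y ω - mu P X S A Y a x) ∂P = 0 := by
    intro a
    rw [integral_sub hY.integrableOn (integrable_const _), setIntegral_const]
    rw [show ∫ ω in {ω | X ω = x ∧ A ω = a ∧ S ω = 1}, Y ω ∂P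
        = mu P X S A Y a x * (P {ω | X ω = x ∧ A ω = a ∧ S ω = 1}).toReal from by
      rw [mu, eCond, div_mul_cancel₀ _ (hPG a).ne']]
    simp only [smul_eq_mul, Measure.real]; ring
  -- mu identification
  have hmuEq : ∀ a : Fin 2, mu P X S A Y a x = eCond P {ω | X ω = x ∧ S ω = 1} (Yp a) := by
    intro a
    have hpos : 0 < P {ω | X ω = x ∧ S ω = 1 ∧ A ω = a} := by
      rw [hIgset a]; exact toPos _ (hPG a)
    have step1 : mu P X S A Y a x = eCond P {ω | X ω = x ∧ A ω = a ∧ S ω = 1} (Yp a) := by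
      rw [mu, eCond, eCond,
        setIntegral_congr_ae (hmG a) ((consistencyObs a).mono fun ω h hm => h hm.2.2 hm.2.1)]
    rw [step1, ← hIgset a, ignorabilityObs a a x hpos]
  -- pointwise identity for psi0 on {X = x}
  have hpsi0 : ∀ ω, X ω = x → psi0 P X S A Y p ω =
      (1 / (pCond P {ω' | S ω' = 0} {ω' | X ω' = x} * p))
        * Set.indicator {ω | X ω = x ∧ S ω = 0 ∧ A ω = 1} Y ω
      - (1 / (pCond P {ω' | S ω' = 0} {ω' | X ω' = x} * (1 - p)))
        * Set.indicator {ω | X ω = x ∧ S ω = 0 ∧ A ω = 0} Y ω := by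
    intro ω hω
    simp only [psi0, hω]
    rcases fin2 (S ω) with hs | hs <;> rcases fin2 (A ω) with ha | ha <;>
      simp [Set.indicator_apply, hω, hs, ha, f01, f10] <;> ring
  -- pointwise identity for psi1 on {X = x}
  have hpsi1 : ∀ ω, X ω = x → psi1 P X S A Y ω =
      ((mu P X S A Y 1 x - mu P X S A Y 0 x) / pCond P {ω' | S ω' = 0} {ω' | X ω' = x})
        * Set.indicator {ω | X ω = x ∧ S ω = 0} (fun _ => (1 : ℝ)) ω
      + (1 / (pCond P {ω' | S ω' = 1} {ω' | X ω' = x}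
            * pCond P {ω' | A ω' = 1} {ω' | X ω' = x ∧ S ω' = 1}))
        * Set.indicator {ω | X ω = x ∧ A ω = 1 ∧ S ω = 1}
            (fun ω => Y ω - mu P X S A Y 1 x) ω
      - (1 / (pCond P {ω' | S ω' = 1} {ω' | X ω' = x}
            * pCond P {ω' | A ω' = 0} {ω' | X ω' = x ∧ S ω' = 1}))
        * Set.indicator {ω | X ω = x ∧ A ω = 0 ∧ S ω = 1}
            (fun ω => Y ω - mu P X S A Y 0 x) ω := by
    intro ω hω
    have hq0ne := hq0pos.ne'
    have hq1ne := hq1pos.ne'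
    have he1ne := he1pos.ne'
    have he0ne := he0pos.ne'
    simp only [psi1, hω]
    rcases fin2 (S ω) with hs | hs <;> rcases fin2 (A ω) with ha | ha
    · simp [Set.indicator_apply, hω, hs, ha, f01, f10]
      ring
    · simp [Set.indicator_apply, hω, hs, ha, f01, f10]
      ring
    · simp [Set.indicator_apply, hω, hs, ha, f01, f10]
      field_simp
    · simp [Set.indicator_apply, hω, hs, ha, f01, f10]
      field_simp
    -- integrability of the surrogate forms
  have hfInt : Integrable (fun ω =>
      (1 / (pCond P {ω' | S ω' = 0} {ω' | X ω' = x} * p))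
        * Set.indicator {ω | X ω = x ∧ S ω = 0 ∧ A ω = 1} Y ω
      - (1 / (pCond P {ω' | S ω' = 0} {ω' | X ω' = x} * (1 - p)))
        * Set.indicator {ω | X ω = x ∧ S ω = 0 ∧ A ω = 0} Y ω) P :=
    ((hY.indicator hmE1).const_mul _).sub ((hY.indicator hmE0).const_mul _)
  have hgInt : Integrable (fun ω =>
      ((mu P X S A Y 1 x - mu P X S A Y 0 x) / pCond P {ω' | S ω' = 0} {ω' | X ω' = x})
        * Set.indicator {ω | X ω = x ∧ S ω = 0} (fun _ => (1 : ℝ)) ω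
      + (1 / (pCond P {ω' | S ω' = 1} {ω' | X ω' = x}
            * pCond P {ω' | A ω' = 1} {ω' | X ω' = x ∧ S ω' = 1}))
        * Set.indicator {ω | X ω = x ∧ A ω = 1 ∧ S ω = 1}
            (fun ω => Y ω - mu P X S A Y 1 x) ω
      - (1 / (pCond P {ω' | S ω' = 1} {ω' | X ω' = x}
            * pCond P {ω' | A ω' = 0} {ω' | X ω' = x ∧ S ω' = 1}))
        * Set.indicator {ω | X ω = x ∧ A ω = 0 ∧ S ω = 1}
            (fun ω => Y ω - mu P X S A Y 0 x) ω) P :=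
    (((((integrable_const _).indicator hmE).const_mul _).add
      (((hY.sub (integrable_const _)).indicator (hmG 1)).const_mul _)).sub
      (((hY.sub (integrable_const _)).indicator (hmG 0)).const_mul _))
  -- reduce indicator integrals to set integrals
  have hindInt : ∀ (T : Set Ω), MeasurableSet T → ∀ f : Ω → ℝ, T ⊆ {ω | X ω = x} →
      ∫ ω in {ω | X ω = x}, Set.indicator T f ω ∂P = ∫ ω in T, f ω ∂P := by
    intro T hT f hsub
    rw [setIntegral_indicator hT, Set.inter_eq_self_of_subset_right hsub]
  -- nonzero denominators
  have hPxne := hPx.ne'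
  have hPEne := hPE.ne'
  have hpne := hp0.ne'
  have h1pne : (1 : ℝ) - p ≠ 0 := by linarith
  -- value of the RCT part
  have hIf : ∫ ω in {ω | X ω = x}, ((1 / (pCond P {ω' | S ω' = 0} {ω' | X ω' = x} * p))
        * Set.indicator {ω | X ω = x ∧ S ω = 0 ∧ A ω = 1} Y ω
      - (1 / (pCond P {ω' | S ω' = 0} {ω' | X ω' = x} * (1 - p)))
        * Set.indicator {ω | X ω = x ∧ S ω = 0 ∧ A ω = 0} Y ω) ∂P
      = (P {ω | X ω = x}).toReal
        * (eCond P {ω | X ω = x ∧ S ω = 0} (Yp 1) - eCond P {ω | X ω = x ∧ S ω = 0} (Yp 0)) := by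
    rw [integral_sub ((hY.indicator hmE1).const_mul _).integrableOn
      ((hY.indicator hmE0).const_mul _).integrableOn, integral_const_mul, integral_const_mul,
      hindInt _ hmE1 Y (fun ω h => h.1), hindInt _ hmE0 Y (fun ω h => h.1), hYE1, hYE0, hq0]
    field_simp
  -- value of the observational part
  have hIg : ∫ ω in {ω | X ω = x}, (((mu P X S A Y 1 x - mu P X S A Y 0 x)
          / pCond P {ω' | S ω' = 0} {ω' | X ω' = x})
        * Set.indicator {ω | X ω = x ∧ S ω = 0} (fun _ => (1 : ℝ)) ω
      + (1 / (pCond P {ω' | S ω' = 1} {ω' | X ω' = x}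
            * pCond P {ω' | A ω' = 1} {ω' | X ω' = x ∧ S ω' = 1}))
        * Set.indicator {ω | X ω = x ∧ A ω = 1 ∧ S ω = 1}
            (fun ω => Y ω - mu P X S A Y 1 x) ω
      - (1 / (pCond P {ω' | S ω' = 1} {ω' | X ω' = x}
            * pCond P {ω' | A ω' = 0} {ω' | X ω' = x ∧ S ω' = 1}))
        * Set.indicator {ω | X ω = x ∧ A ω = 0 ∧ S ω = 1}
            (fun ω => Y ω - mu P X S A Y 0 x) ω) ∂P
      = (P {ω | X ω = x}).toReal * (mu P X S A Y 1 x - mu P X S A Y 0 x) := by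
    have hA1 : Integrable (fun ω => ((mu P X S A Y 1 x - mu P X S A Y 0 x)
          / pCond P {ω' | S ω' = 0} {ω' | X ω' = x})
        * Set.indicator {ω | X ω = x ∧ S ω = 0} (fun _ => (1 : ℝ)) ω) (P.restrict {ω | X ω = x}) := by
      exact (((integrable_const _).indicator hmE).const_mul _).integrableOn
    have hA2 : Integrable (fun ω => (1 / (pCond P {ω' | S ω' = 1} {ω' | X ω' = x}
            * pCond P {ω' | A ω' = 1} {ω' | X ω' = x ∧ S ω' = 1}))
        * Set.indicator {ω | X ω = x ∧ A ω = 1 ∧ S ω = 1}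
            (fun ω => Y ω - mu P X S A Y 1 x) ω) (P.restrict {ω | X ω = x}) := by
      exact (((hY.sub (integrable_const _)).indicator (hmG 1)).const_mul _).integrableOn
    have hA3 : Integrable (fun ω => (1 / (pCond P {ω' | S ω' = 1} {ω' | X ω' = x}
            * pCond P {ω' | A ω' = 0} {ω' | X ω' = x ∧ S ω' = 1}))
        * Set.indicator {ω | X ω = x ∧ A ω = 0 ∧ S ω = 1}
            (fun ω => Y ω - mu P X S A Y 0 x) ω) (P.restrict {ω | X ω = x}) := by
      exact (((hY.sub (integrable_const _)).indicator (hmG 0)).const_mul _).integrableOn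
    have hA12 : Integrable (fun ω => ((mu P X S A Y 1 x - mu P X S A Y 0 x)
          / pCond P {ω' | S ω' = 0} {ω' | X ω' = x})
        * Set.indicator {ω | X ω = x ∧ S ω = 0} (fun _ => (1 : ℝ)) ω
      + (1 / (pCond P {ω' | S ω' = 1} {ω' | X ω' = x}
            * pCond P {ω' | A ω' = 1} {ω' | X ω' = x ∧ S ω' = 1}))
        * Set.indicator {ω | X ω = x ∧ A ω = 1 ∧ S ω = 1}
            (fun ω => Y ω - mu P X S A Y 1 x) ω) (P.restrict {ω | X ω = x}) := by exact hA1.add hA2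
    rw [integral_sub hA12 hA3, integral_add hA1 hA2,
      integral_const_mul, integral_const_mul, integral_const_mul,
      hindInt _ hmE _ (fun ω h => h.1), hindInt _ (hmG 1) _ (fun ω h => h.1),
      hindInt _ (hmG 0) _ (fun ω h => h.1), hGzero 1, hGzero 0, setIntegral_const, hq0]
    simp only [smul_eq_mul, mul_one, mul_zero, add_zero, sub_zero, Measure.real]
    field_simp
  -- the numerator vanishes
  have htr := transport x hP0 hP1
  have hd0 : eCond P {ω | X ω = x ∧ S ω = 0} (fun ω => Yp 1 ω - Yp 0 ω)
      = eCond P {ω | X ω = x ∧ S ω = 0} (Yp 1) - eCond P {ω | X ω = x ∧ S ω = 0} (Yp 0) := by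
    rw [eCond, eCond, eCond, integral_sub (hYp 1).integrableOn (hYp 0).integrableOn, sub_div]
  have hd1 : eCond P {ω | X ω = x ∧ S ω = 1} (fun ω => Yp 1 ω - Yp 0 ω)
      = eCond P {ω | X ω = x ∧ S ω = 1} (Yp 1) - eCond P {ω | X ω = x ∧ S ω = 1} (Yp 0) := by
    rw [eCond, eCond, eCond, integral_sub (hYp 1).integrableOn (hYp 0).integrableOn, sub_div]
  rw [hd0, hd1] at htr
  have hnum : ∫ ω in {ω | X ω = x}, (psi1 P X S A Y ω - psi0 P X S A Y p ω) ∂P = 0 := by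
    rw [setIntegral_congr_ae hmx (Filter.Eventually.of_forall fun ω hω => by
      rw [hpsi1 ω hω, hpsi0 ω hω] :
      ∀ᵐ ω ∂P, ω ∈ {ω | X ω = x} → _ = _)]
    rw [integral_sub hgInt.integrableOn hfInt.integrableOn, hIg, hIf, hmuEq 1, hmuEq 0]
    linear_combination (-(P {ω | X ω = x}).toReal) * htr
  rw [eCond, hnum, zero_div]
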